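/- Suppose f, g ∈ L²(ℝ) satisfy [f]² < ∞ and [g]² < ∞, and there exist a ∈ ℝ and R > 0 such that f = 0 almost everywhere on (a − R, ∞) and g = 0 almost everywhere on (−∞, a + R). Then the pairing ⟨f, g⟩ is well defined (the integrand is absolutely integrable) and |⟨f, g⟩| ≤ ‖f‖_{L²(ℝ)} ‖g‖_{L²(ℝ)} / (2πR√6). -/

import Mathlib

open Real MeasureTheory Filter Topology
open scoped ENNReal NNReal

noncomputable section

/-- `k = min {h, 1}`. -/
def kparam (h : ℝ) : ℝ := min h 1

/-- `α = arccos k ∈ [0, π/2]`. -/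
def alphaParam (h : ℝ) : ℝ := Real.arccos (kparam h)

/-- The anisotropy potential `W_h(θ) = (1/2)(cos²θ − 2h cos θ + 2hk − k²)`. -/
def Wpot (h θ : ℝ) : ℝ :=
  (1/2) * ((Real.cos θ)^2 - 2*h*Real.cos θ + 2*h*(kparam h) - (kparam h)^2)

/-- The set `2πℤ + {−α, α}` of allowed limits at `±∞`. -/
def limSet (h : ℝ) : Set ℝ :=
  {y | ∃ n : ℤ, y = 2*Real.pi*n + alphaParam h ∨ y = 2*Real.pi*n - alphaParam h}

/-- The total energy `E_h(φ)`, valued in `[0, ∞]`: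
exchange + anisotropy energy plus the stray-field (homogeneous `H^{1/2}`) energy. -/
def energy (h : ℝ) (φ : ℝ → ℝ) : ℝ≥0∞ :=
  ENNReal.ofReal (1/2) *
      (∫⁻ x : ℝ, ENNReal.ofReal ((deriv φ x)^2 + 2 * Wpot h (φ x))) +
    ENNReal.ofReal (1/(4*Real.pi)) *
      (∫⁻ s : ℝ, ∫⁻ t : ℝ,
        ENNReal.ofReal ((Real.cos (φ s) - Real.cos (φ t))^2 / (s - t)^2))

/-- An admissible phase: `C¹`, limits at `±∞` in `2πℤ + {−α, α}`, finite energy. -/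
def Admissible (h : ℝ) (φ : ℝ → ℝ) : Prop :=
  ContDiff ℝ 1 φ ∧
    (∃ L ∈ limSet h, Tendsto φ atTop (𝓝 L)) ∧
    (∃ L ∈ limSet h, Tendsto φ atBot (𝓝 L)) ∧
    energy h φ < ⊤

/-- The winding number `deg(φ) = (φ(+∞) − φ(−∞))/(2π)`. -/
def deg (φ : ℝ → ℝ) : ℝ :=
  (limUnder atTop φ - limUnder atBot φ) / (2*Real.pi)

/-- `𝒜_h(d)`: admissible phases of winding number `d`. -/
def AA (h d : ℝ) : Set (ℝ → ℝ) := {φ | Admissible h φ ∧ deg φ = d}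

/-- `ℰ_h(d) = inf {E_h(φ) : φ ∈ 𝒜_h(d)}`. -/
def Einf (h d : ℝ) : ℝ≥0∞ := ⨅ φ ∈ AA h d, energy h φ

/-- `D_α = {n + j·α/π : n ∈ ℤ, j ∈ {−1, 0, 1}}`. -/
def Dset (h : ℝ) : Set ℝ :=
  {d | ∃ n j : ℤ, (j = -1 ∨ j = 0 ∨ j = 1) ∧ d = n + j * alphaParam h / Real.pi}

/-- The squared homogeneous `H^{1/2}(ℝ)` seminorm, valued in `[0,∞]`. -/
def semiH (f : ℝ → ℝ) : ℝ≥0∞ :=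
  ENNReal.ofReal (1/(2*Real.pi)) *
    ∫⁻ s : ℝ, ∫⁻ t : ℝ, ENNReal.ofReal ((f s - f t)^2 / (s - t)^2)

section SeparatedSupportsHelpers
open Set

lemma inner_int {s c : ℝ} (hsc : s < c) :
    IntegrableOn (fun t : ℝ => (((s - t)^2)^2)⁻¹) (Ioi c) ∧
      ∫ t in Ioi c, (((s - t)^2)^2)⁻¹ = (1/3) * ((c - s)^3)⁻¹ := by
  have hderiv : ∀ t ∈ Ici c, HasDerivAt (fun t : ℝ => (-1/3) * ((t - s)^3)⁻¹)
      ((((s - t)^2)^2)⁻¹) t := by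
    intro t ht
    have hts : t - s ≠ 0 := by have := lt_of_lt_of_le hsc ht; intro h; linarith [sub_eq_zero.mp h]
    have h1 : HasDerivAt (fun t : ℝ => (t - s)^3) ((3:ℕ) * (t - s)^(3-1) * 1) t :=
      ((hasDerivAt_id t).sub_const s).pow 3
    have h2 := (h1.inv (pow_ne_zero 3 hts)).const_mul ((-1:ℝ)/3)
    convert h2 using 1
    · rfl
    · rfl
    · rfl
    rw [show ((s - t)^2)^2 = (t - s)^4 by ring, show ((t - s)^3)^2 = (t - s)^6 by ring]
    field_simp
    ring
  have hpos : ∀ t ∈ Ioi c, 0 ≤ (((s - t)^2)^2)⁻¹ := fun t _ => by positivity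
  have htend : Tendsto (fun t : ℝ => (-1/3) * ((t - s)^3)⁻¹) atTop (𝓝 0) := by
    have l1 : Tendsto (fun t : ℝ => t - s) atTop atTop := by
      simpa [sub_eq_add_neg] using tendsto_atTop_add_const_right atTop (-s) tendsto_id
    have l2 : Tendsto (fun t : ℝ => (t - s)^3) atTop atTop :=
      (tendsto_pow_atTop (n := 3) (by norm_num)).comp l1
    have l3 := l2.inv_tendsto_atTop
    have l4 := l3.const_mul ((-1:ℝ)/3)
    simpa using l4
  refine ⟨integrableOn_Ioi_deriv_of_nonneg' hderiv hpos htend, ?_⟩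
  rw [integral_Ioi_of_hasDerivAt_of_nonneg' hderiv hpos htend]
  field_simp
  ring

lemma outer_int {b c : ℝ} (hbc : b < c) :
    IntegrableOn (fun x : ℝ => (1/3) * ((c - x)^3)⁻¹) (Iic b) ∧
      ∫ x in Iic b, (1/3) * ((c - x)^3)⁻¹ = (1/6) * ((c - b)^2)⁻¹ := by
  have hderiv : ∀ x ∈ Ici (-b), HasDerivAt (fun x : ℝ => (-1/6) * ((c + x)^2)⁻¹)
      ((1/3) * ((c + x)^3)⁻¹) x := by
    intro x hx
    have hcx : c + x ≠ 0 := by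
      have : -b ≤ x := hx
      intro h; nlinarith [h]
    have h1 : HasDerivAt (fun x : ℝ => (c + x)^2) ((2:ℕ) * (c + x)^(2-1) * 1) x :=
      ((hasDerivAt_id x).const_add c).pow 2
    have h2 := (h1.inv (pow_ne_zero 2 hcx)).const_mul ((-1:ℝ)/6)
    convert h2 using 1
    · rfl
    · rfl
    · rfl
    rw [show ((c + x)^2)^2 = (c + x)^4 by ring]
    field_simp
    ring
  have hpos : ∀ x ∈ Ioi (-b), 0 ≤ (1/3) * ((c + x)^3)⁻¹ := by
    intro x hx
    have : 0 < c + x := by have : -b < x := hx; linarith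
    positivity
  have htend : Tendsto (fun x : ℝ => (-1/6) * ((c + x)^2)⁻¹) atTop (𝓝 0) := by
    have l1 : Tendsto (fun x : ℝ => c + x) atTop atTop := tendsto_atTop_add_const_left atTop c tendsto_id
    have l2 : Tendsto (fun x : ℝ => (c + x)^2) atTop atTop :=
      (tendsto_pow_atTop (n := 2) (by norm_num)).comp l1
    have l4 := l2.inv_tendsto_atTop.const_mul ((-1:ℝ)/6)
    simpa using l4
  have hIoi : IntegrableOn (fun x : ℝ => (1/3) * ((c + x)^3)⁻¹) (Ioi (-b)) :=
    integrableOn_Ioi_deriv_of_nonneg' hderiv hpos htend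
  have hval : ∫ x in Ioi (-b), (1/3) * ((c + x)^3)⁻¹ = (1/6) * ((c - b)^2)⁻¹ := by
    rw [integral_Ioi_of_hasDerivAt_of_nonneg' hderiv hpos htend]
    have : c + -b = c - b := by ring
    rw [this]
    field_simp
    ring
  constructor
  · -- transfer integrability via negation
    have A : MeasurableEmbedding fun x : ℝ => -x :=
      (Homeomorph.neg ℝ).isClosedEmbedding.measurableEmbedding
    have h1 : IntegrableOn (fun x : ℝ => (1/3) * ((c - x)^3)⁻¹) (Iic b) ↔
        IntegrableOn ((fun x : ℝ => (1/3) * ((c - x)^3)⁻¹) ∘ (fun x : ℝ => -x)) (Ici (-b)) := by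
      rw [IntegrableOn, IntegrableOn, ← Measure.map_neg_eq_self (volume : Measure ℝ),
        A.restrict_map, ← A.integrable_map_iff]
      congr! 2
      · simp [neg_preimage, neg_Iic]
    rw [h1]
    have : ((fun x : ℝ => (1/3) * ((c - x)^3)⁻¹) ∘ (fun x : ℝ => -x)) =
        fun x : ℝ => (1/3) * ((c + x)^3)⁻¹ := by
      funext x; simp [Function.comp, sub_neg_eq_add]
    rw [this]
    exact (integrableOn_Ici_iff_integrableOn_Ioi).mpr hIoi
  · have h := integral_comp_neg_Iic b (fun x : ℝ => (1/3) * ((c + x)^3)⁻¹)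
    calc ∫ x in Iic b, (1/3) * ((c - x)^3)⁻¹
        = ∫ x in Iic b, (fun y : ℝ => (1/3) * ((c + y)^3)⁻¹) (-x) := by
          apply setIntegral_congr_fun measurableSet_Iic
          intro x _
          simp [sub_eq_add_neg]
      _ = ∫ x in Ioi (-b), (1/3) * ((c + x)^3)⁻¹ := h
      _ = (1/6) * ((c - b)^2)⁻¹ := hval

lemma kernel_sq {a R : ℝ} (hR : 0 < R) :
    ∫⁻ s in Iic (a - R), ∫⁻ t in Ici (a + R),
        ENNReal.ofReal ((((s - t)^2)^2)⁻¹) ∂(volume : Measure ℝ) ∂(volume : Measure ℝ)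
      = ENNReal.ofReal ((24 * R^2)⁻¹) := by
  have hbc : a - R < a + R := by linarith
  have hinner : ∀ s ∈ Iic (a - R),
      (∫⁻ t in Ici (a + R), ENNReal.ofReal ((((s - t)^2)^2)⁻¹) ∂(volume : Measure ℝ))
        = ENNReal.ofReal ((1/3) * ((a + R - s)^3)⁻¹) := by
    intro s hs
    have hsc : s < a + R := lt_of_le_of_lt hs hbc
    obtain ⟨hInt, hval⟩ := inner_int hsc
    rw [← Measure.restrict_congr_set Ioi_ae_eq_Ici,
      ← ofReal_integral_eq_lintegral_ofReal hInt (ae_of_all _ fun t => by positivity), hval]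
  rw [setLIntegral_congr_fun measurableSet_Iic hinner]
  obtain ⟨hInt, hval⟩ := outer_int hbc
  rw [← ofReal_integral_eq_lintegral_ofReal hInt
    ((ae_restrict_iff' measurableSet_Iic).mpr (ae_of_all _ fun x hx => by
      have : (0:ℝ) < a + R - x := by have : x ≤ a - R := hx; linarith
      positivity)), hval]
  congr 1
  have : a + R - (a - R) = 2 * R := by ring
  rw [this]
  rw [show (2 * R)^2 = 4 * R^2 by ring]
  rw [mul_inv]
  ring

lemma core_bound (u v : ℝ → ℝ) (hu : Measurable u) (hv : Measurable v)
    (a R : ℝ) (hR : 0 < R)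
    (hua : ∀ x, x ∉ Iic (a - R) → u x = 0) (hvb : ∀ x, x ∉ Ici (a + R) → v x = 0) :
    ∫⁻ p : ℝ × ℝ, ENNReal.ofReal |u p.1 * v p.2 / (p.1 - p.2)^2|
        ∂((volume : Measure ℝ).prod volume)
      ≤ eLpNorm u 2 volume * eLpNorm v 2 volume *
          ENNReal.ofReal ((2 * R * Real.sqrt 6)⁻¹) := by
  set A : Set ℝ := Iic (a - R) with hA
  set B : Set ℝ := Ici (a + R) with hB
  set φ : ℝ × ℝ → ℝ≥0∞ := fun p => ENNReal.ofReal |u p.1| * ENNReal.ofReal |v p.2| with hφ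
  set ψ : ℝ × ℝ → ℝ≥0∞ :=
    (A ×ˢ B).indicator (fun p : ℝ × ℝ => ENNReal.ofReal (((p.1 - p.2)^2)⁻¹)) with hψ
  have hABm : MeasurableSet (A ×ˢ B) := measurableSet_Iic.prod measurableSet_Ici
  have hφm : Measurable φ :=
    (((hu.comp measurable_fst).abs).ennreal_ofReal).mul
      (((hv.comp measurable_snd).abs).ennreal_ofReal)
  have hψm : Measurable ψ :=
    Measurable.indicator
      ((((measurable_fst.sub measurable_snd).pow_const 2).inv).ennreal_ofReal) hABm
  -- pointwise identity
  have hpoint : ∀ p : ℝ × ℝ,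
      ENNReal.ofReal |u p.1 * v p.2 / (p.1 - p.2)^2| = (φ * ψ) p := by
    intro p
    by_cases hp : p ∈ A ×ˢ B
    · have habs : |u p.1 * v p.2 / (p.1 - p.2)^2| =
          |u p.1| * |v p.2| * ((p.1 - p.2)^2)⁻¹ := by
        rw [abs_div, abs_mul, div_eq_mul_inv]
        congr 1
        rw [abs_pow, sq_abs]
      simp only [Pi.mul_apply, hψ, Set.indicator_of_mem hp]
      rw [habs, ENNReal.ofReal_mul (by positivity), ENNReal.ofReal_mul (abs_nonneg _)]
    · have hz : u p.1 = 0 ∨ v p.2 = 0 := by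
        rw [Set.mem_prod, not_and_or] at hp
        rcases hp with h | h
        · exact Or.inl (hua _ h)
        · exact Or.inr (hvb _ h)
      rcases hz with h | h <;> simp [hφ, Pi.mul_apply, h]
  rw [lintegral_congr hpoint]
  have hconj : (2:ℝ).HolderConjugate 2 := Real.HolderConjugate.two_two
  refine le_trans
    (ENNReal.lintegral_mul_le_Lp_mul_Lq _ hconj hφm.aemeasurable hψm.aemeasurable) ?_
  have hφ2 : ∫⁻ p : ℝ × ℝ, φ p ^ (2:ℝ) ∂((volume : Measure ℝ).prod volume)
      = (∫⁻ x, (‖u x‖₊ : ℝ≥0∞) ^ (2:ℝ) ∂volume) * ∫⁻ x, (‖v x‖₊ : ℝ≥0∞) ^ (2:ℝ) ∂volume := by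
    have : ∀ p : ℝ × ℝ, φ p ^ (2:ℝ) =
        ((‖u p.1‖₊ : ℝ≥0∞) ^ (2:ℝ)) * ((‖v p.2‖₊ : ℝ≥0∞) ^ (2:ℝ)) := by
      intro p
      rw [hφ]
      simp only
      rw [ENNReal.mul_rpow_of_nonneg _ _ (by norm_num)]
      rw [← enorm_eq_nnnorm, ← enorm_eq_nnnorm, Real.enorm_eq_ofReal_abs, Real.enorm_eq_ofReal_abs]
    rw [lintegral_congr this]
    exact lintegral_prod_mul ((hu.enorm.pow_const _).aemeasurable)
      ((hv.enorm.pow_const _).aemeasurable)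
  have hψ2 : ∫⁻ p : ℝ × ℝ, ψ p ^ (2:ℝ) ∂((volume : Measure ℝ).prod volume)
      = ENNReal.ofReal ((24 * R^2)⁻¹) := by
    have hpt : ∀ p : ℝ × ℝ, ψ p ^ (2:ℝ) =
        ((A ×ˢ B).indicator
          (fun p : ℝ × ℝ => ENNReal.ofReal ((((p.1 - p.2)^2)^2)⁻¹))) p := by
      intro p
      by_cases hp : p ∈ A ×ˢ B
      · rw [hψ]
        simp only [Set.indicator_of_mem hp]
        rw [ENNReal.rpow_two, sq, ← ENNReal.ofReal_mul (by positivity)]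
        congr 1
        rw [← mul_inv, ← sq]
      · rw [hψ]
        simp only [Set.indicator_of_notMem hp]
        rw [ENNReal.rpow_two]
        simp
    rw [lintegral_congr hpt, lintegral_indicator hABm, ← Measure.prod_restrict,
      lintegral_prod (fun p : ℝ × ℝ => ENNReal.ofReal ((((p.1 - p.2)^2)^2)⁻¹)) (((((measurable_fst.sub measurable_snd).pow_const 2).pow_const
        2).inv).ennreal_ofReal).aemeasurable]
    exact kernel_sq hR
  rw [hφ2, hψ2]
  rw [ENNReal.mul_rpow_of_nonneg _ _ (by norm_num)]
  have h1 : (∫⁻ x, (‖u x‖₊ : ℝ≥0∞) ^ (2:ℝ) ∂volume) ^ (1/(2:ℝ)) = eLpNorm u 2 volume := by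
    rw [eLpNorm_eq_lintegral_rpow_enorm_toReal (by norm_num) (by norm_num)]
    norm_num
    rfl
  have h2 : (∫⁻ x, (‖v x‖₊ : ℝ≥0∞) ^ (2:ℝ) ∂volume) ^ (1/(2:ℝ)) = eLpNorm v 2 volume := by
    rw [eLpNorm_eq_lintegral_rpow_enorm_toReal (by norm_num) (by norm_num)]
    norm_num
    rfl
  rw [h1, h2]
  have h3 : (ENNReal.ofReal ((24 * R^2)⁻¹)) ^ (1/(2:ℝ))
      = ENNReal.ofReal ((2 * R * Real.sqrt 6)⁻¹) := by
    rw [ENNReal.ofReal_rpow_of_nonneg (by positivity) (by norm_num)]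
    congr 1
    rw [← Real.sqrt_eq_rpow, show 24 * R^2 = (2 * R * Real.sqrt 6)^2 by
      have h6 : Real.sqrt 6 ^ 2 = 6 := Real.sq_sqrt (by norm_num)
      nlinarith [h6]]
    rw [Real.sqrt_inv, Real.sqrt_sq (by positivity)]
  rw [h3]

end SeparatedSupportsHelpers

/-- The `H^{1/2}` pairing of two `L²` functions with supports separated
by a gap `2R` is well defined and small. -/
theorem separated_supports (f g : ℝ → ℝ)
    (hf2 : MemLp f 2 (volume : Measure ℝ)) (hg2 : MemLp g 2 (volume : Measure ℝ))
    (hfs : semiH f < ⊤) (hgs : semiH g < ⊤)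
    (a R : ℝ) (hR : 0 < R)
    (hfsupp : ∀ᵐ x : ℝ, x ∈ Set.Ioi (a - R) → f x = 0)
    (hgsupp : ∀ᵐ x : ℝ, x ∈ Set.Iio (a + R) → g x = 0) :
    Integrable (fun p : ℝ × ℝ => (f p.1 - f p.2) * (g p.1 - g p.2) / (p.1 - p.2)^2)
      ((volume : Measure ℝ).prod volume) ∧
    |(1/(2*Real.pi)) * ∫ p : ℝ × ℝ,
        (f p.1 - f p.2) * (g p.1 - g p.2) / (p.1 - p.2)^2
          ∂((volume : Measure ℝ).prod volume)| ≤
      (eLpNorm f 2 volume).toReal * (eLpNorm g 2 volume).toReal /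
        (2 * Real.pi * R * Real.sqrt 6) := by
  set ν : Measure (ℝ × ℝ) := (volume : Measure ℝ).prod volume with hν
  -- measurable support-truncated representatives
  set u : ℝ → ℝ := (Set.Iic (a - R)).indicator (hf2.1.mk f) with hu_def
  set v : ℝ → ℝ := (Set.Ici (a + R)).indicator (hg2.1.mk g) with hv_def
  have hum : Measurable u :=
    (hf2.1.stronglyMeasurable_mk.measurable).indicator measurableSet_Iic
  have hvm : Measurable v :=
    (hg2.1.stronglyMeasurable_mk.measurable).indicator measurableSet_Ici
  have hua : ∀ x, x ∉ Set.Iic (a - R) → u x = 0 := fun x hx => Set.indicator_of_notMem hx _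
  have hvb : ∀ x, x ∉ Set.Ici (a + R) → v x = 0 := fun x hx => Set.indicator_of_notMem hx _
  have hmf : f =ᵐ[volume] u := by
    filter_upwards [hf2.1.ae_eq_mk, hfsupp] with x h1 h2
    by_cases hx : x ∈ Set.Iic (a - R)
    · rw [hu_def]; rw [Set.indicator_of_mem hx]; exact h1
    · rw [hu_def, Set.indicator_of_notMem hx]
      exact h2 (by simpa [Set.mem_Ioi] using lt_of_not_ge hx)
  have hmg : g =ᵐ[volume] v := by
    filter_upwards [hg2.1.ae_eq_mk, hgsupp] with x h1 h2
    by_cases hx : x ∈ Set.Ici (a + R)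
    · rw [hv_def]; rw [Set.indicator_of_mem hx]; exact h1
    · rw [hv_def, Set.indicator_of_notMem hx]
      exact h2 (by simpa [Set.mem_Iio] using lt_of_not_ge hx)
  have hsnu : eLpNorm u 2 volume = eLpNorm f 2 volume := eLpNorm_congr_ae hmf.symm
  have hsnv : eLpNorm v 2 volume = eLpNorm g 2 volume := eLpNorm_congr_ae hmg.symm
  -- a.e. equality on the product
  have hfst : (fun p : ℝ × ℝ => f p.1) =ᵐ[ν] fun p => u p.1 :=
    Measure.quasiMeasurePreserving_fst.ae_eq hmf
  have hsnd : (fun p : ℝ × ℝ => f p.2) =ᵐ[ν] fun p => u p.2 :=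
    Measure.quasiMeasurePreserving_snd.ae_eq hmf
  have hgst : (fun p : ℝ × ℝ => g p.1) =ᵐ[ν] fun p => v p.1 :=
    Measure.quasiMeasurePreserving_fst.ae_eq hmg
  have hgnd : (fun p : ℝ × ℝ => g p.2) =ᵐ[ν] fun p => v p.2 :=
    Measure.quasiMeasurePreserving_snd.ae_eq hmg
  have hae : (fun p : ℝ × ℝ => (f p.1 - f p.2) * (g p.1 - g p.2) / (p.1 - p.2)^2)
      =ᵐ[ν] fun p => (u p.1 - u p.2) * (v p.1 - v p.2) / (p.1 - p.2)^2 := by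
    filter_upwards [hfst, hsnd, hgst, hgnd] with p e1 e2 e3 e4
    rw [e1, e2, e3, e4]
  -- the two cross terms
  set T1 : ℝ × ℝ → ℝ := fun p => u p.1 * v p.2 / (p.1 - p.2)^2 with hT1_def
  set T2 : ℝ × ℝ → ℝ := fun p => u p.2 * v p.1 / (p.1 - p.2)^2 with hT2_def
  have huv : ∀ x : ℝ, u x * v x = 0 := by
    intro x
    by_cases hx : x ∈ Set.Iic (a - R)
    · have : x ∉ Set.Ici (a + R) := by
        simp only [Set.mem_Iic] at hx; simp only [Set.mem_Ici, not_le]; linarith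
      rw [hvb x this, mul_zero]
    · rw [hua x hx, zero_mul]
  have hIu : ∀ p : ℝ × ℝ, (u p.1 - u p.2) * (v p.1 - v p.2) / (p.1 - p.2)^2
      = -(T1 p) - T2 p := by
    intro p
    have hnum : (u p.1 - u p.2) * (v p.1 - v p.2) =
        -(u p.1 * v p.2) - u p.2 * v p.1 := by
      have h1 := huv p.1
      have h2 := huv p.2
      nlinarith [h1, h2]
    rw [hT1_def, hT2_def]
    simp only
    rw [hnum]
    ring
  -- measurability of T1
  have hT1m : Measurable T1 :=
    ((hum.comp measurable_fst).mul (hvm.comp measurable_snd)).div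
      ((measurable_fst.sub measurable_snd).pow_const 2)
  -- the core bound
  have hcore : ∫⁻ p : ℝ × ℝ, ENNReal.ofReal |T1 p| ∂ν ≤
      eLpNorm f 2 volume * eLpNorm g 2 volume * ENNReal.ofReal ((2 * R * Real.sqrt 6)⁻¹) := by
    rw [← hsnu, ← hsnv]
    exact core_bound u v hum hvm a R hR hua hvb
  have hfin : eLpNorm f 2 volume * eLpNorm g 2 volume *
      ENNReal.ofReal ((2 * R * Real.sqrt 6)⁻¹) < ⊤ :=
    ENNReal.mul_lt_top (ENNReal.mul_lt_top hf2.2 hg2.2) ENNReal.ofReal_lt_top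
  have hT1i : Integrable T1 ν := by
    refine ⟨hT1m.aestronglyMeasurable, ?_⟩
    rw [HasFiniteIntegral]
    calc ∫⁻ p, (‖T1 p‖₊ : ℝ≥0∞) ∂ν = ∫⁻ p, ENNReal.ofReal |T1 p| ∂ν := by
          congr 1; funext p; exact Real.enorm_eq_ofReal_abs _
      _ ≤ _ := hcore
      _ < ⊤ := hfin
  -- T2 = T1 ∘ swap
  have hT2eq : T2 = fun p : ℝ × ℝ => T1 (Prod.swap p) := by
    funext p
    rw [hT1_def, hT2_def]
    simp only [Prod.swap, Prod.fst, Prod.snd]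
    rw [show (p.2 - p.1)^2 = (p.1 - p.2)^2 by ring]
  have hswap : MeasurePreserving (Prod.swap : ℝ × ℝ → ℝ × ℝ) ν ν :=
    Measure.measurePreserving_swap
  have hemb : MeasurableEmbedding (Prod.swap : ℝ × ℝ → ℝ × ℝ) :=
    MeasurableEquiv.prodComm.measurableEmbedding
  have hT2i : Integrable T2 ν := by
    rw [hT2eq]
    exact (hswap.integrable_comp_emb hemb).mpr hT1i
  have hT2int : ∫ p, T2 p ∂ν = ∫ p, T1 p ∂ν := by
    rw [hT2eq]
    exact hswap.integral_comp hemb T1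
  -- integrability of the full integrand
  have hIuInt : Integrable (fun p : ℝ × ℝ =>
      (u p.1 - u p.2) * (v p.1 - v p.2) / (p.1 - p.2)^2) ν := by
    have : Integrable (fun p : ℝ × ℝ => -(T1 p) - T2 p) ν := hT1i.neg.sub hT2i
    exact this.congr (Filter.EventuallyEq.of_eq (funext fun p => (hIu p).symm))
  have hInt : Integrable (fun p : ℝ × ℝ =>
      (f p.1 - f p.2) * (g p.1 - g p.2) / (p.1 - p.2)^2) ν := hIuInt.congr hae.symm
  refine ⟨hInt, ?_⟩
  -- bound the T1 integral
  have hT1bound : |∫ p, T1 p ∂ν| ≤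
      (eLpNorm f 2 volume).toReal * (eLpNorm g 2 volume).toReal * (2 * R * Real.sqrt 6)⁻¹ := by
    have h1 : |∫ p, T1 p ∂ν| ≤ (∫⁻ p, ENNReal.ofReal ‖T1 p‖ ∂ν).toReal := by
      rw [← Real.norm_eq_abs]
      exact norm_integral_le_lintegral_norm T1
    refine h1.trans ?_
    have h2 : (∫⁻ p, ENNReal.ofReal ‖T1 p‖ ∂ν) ≤
        eLpNorm f 2 volume * eLpNorm g 2 volume * ENNReal.ofReal ((2 * R * Real.sqrt 6)⁻¹) := by
      calc ∫⁻ p, ENNReal.ofReal ‖T1 p‖ ∂ν = ∫⁻ p, ENNReal.ofReal |T1 p| ∂ν := by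
            simp only [Real.norm_eq_abs]
        _ ≤ _ := hcore
    have h3 := ENNReal.toReal_mono hfin.ne h2
    refine h3.trans_eq ?_
    rw [ENNReal.toReal_mul, ENNReal.toReal_mul, ENNReal.toReal_ofReal (by positivity)]
  -- compute the integral
  have hint_eq : ∫ p : ℝ × ℝ, (f p.1 - f p.2) * (g p.1 - g p.2) / (p.1 - p.2)^2 ∂ν
      = -(∫ p, T1 p ∂ν) - ∫ p, T2 p ∂ν := by
    rw [integral_congr_ae hae]
    rw [integral_congr_ae (Filter.EventuallyEq.of_eq (funext hIu))]
    have hsub : ∫ p, (-(T1 p) - T2 p) ∂ν = (∫ p, -(T1 p) ∂ν) - ∫ p, T2 p ∂ν :=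
      integral_sub hT1i.neg hT2i
    rw [hsub, integral_neg]
  rw [hint_eq, hT2int]
  have hπ : (0:ℝ) < Real.pi := Real.pi_pos
  have h6 : (0:ℝ) < Real.sqrt 6 := Real.sqrt_pos.mpr (by norm_num)
  rw [abs_mul]
  have habs1 : |1/(2*Real.pi)| = 1/(2*Real.pi) := abs_of_pos (by positivity)
  rw [habs1]
  have hb2 : |-(∫ p, T1 p ∂ν) - ∫ p, T1 p ∂ν| ≤ 2 * |∫ p, T1 p ∂ν| := by
    rw [show -(∫ p, T1 p ∂ν) - ∫ p, T1 p ∂ν = -(2 * ∫ p, T1 p ∂ν) by ring, abs_neg, abs_mul]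
    norm_num
  calc (1/(2*Real.pi)) * |-(∫ p, T1 p ∂ν) - ∫ p, T1 p ∂ν|
      ≤ (1/(2*Real.pi)) * (2 * |∫ p, T1 p ∂ν|) := by
        apply mul_le_mul_of_nonneg_left hb2 (by positivity)
    _ ≤ (1/(2*Real.pi)) * (2 * ((eLpNorm f 2 volume).toReal * (eLpNorm g 2 volume).toReal *
          (2 * R * Real.sqrt 6)⁻¹)) := by
        apply mul_le_mul_of_nonneg_left _ (by positivity)
        apply mul_le_mul_of_nonneg_left hT1bound (by norm_num)
    _ = (eLpNorm f 2 volume).toReal * (eLpNorm g 2 volume).toReal /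
          (2 * Real.pi * R * Real.sqrt 6) := by
        field_simp
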